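/- Let M and N be finite simple matroids, each on a ground set of n elements, and suppose their Möbius polynomials are equal: μ_M(S,T) = μ_N(S,T). Then M and N have the same girth d*. -/

import Mathlib

open Matroid Polynomial Finset
open scoped Classical

namespace PaperMatroid

variable {α : Type*}

/-- The rank of a finset in a matroid on a finite type: the maximum size of an
independent subset. -/
noncomputable def mrk [Fintype α] (M : Matroid α) (x : Finset α) : ℕ :=
  (x.powerset.filter (fun (I : Finset α) => M.Indep (I : Set α))).sup Finset.card

/-- A circuit of a matroid: a minimal dependent set. -/
def IsCircuit (M : Matroid α) (C : Set α) : Prop :=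
  M.Dep C ∧ ∀ ⦃D⦄, D ⊂ C → M.Indep D

/-- The girth of a matroid: the minimum size of a circuit. -/
noncomputable def girth (M : Matroid α) : ℕ :=
  sInf {n | ∃ C, IsCircuit M C ∧ C.ncard = n}

/-- The cogirth of a matroid: the girth of the dual matroid, i.e. the minimum
size of a cocircuit. -/
noncomputable def cogirth (M : Matroid α) : ℕ := girth M✶

/-- The finset of (finsets corresponding to) flats of a matroid on a finite type. -/
noncomputable def flats [Fintype α] (M : Matroid α) : Finset (Finset α) :=
  Finset.univ.filter fun F => M.IsFlat ↑F

/-- The Möbius function of the lattice of flats of a matroid: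
`μ(X,X) = 1`, `μ(X,Y) = -Σ_{X ⊆ Z ⊊ Y, Z a flat} μ(X,Z)` for `X ⊊ Y`, and `0` otherwise. -/
noncomputable def mob [Fintype α] (M : Matroid α) (X Y : Finset α) : ℤ :=
  if X = Y then 1
  else if X ⊆ Y then
    -∑ Z ∈ ((flats M).filter fun Z => X ⊆ Z ∧ Z ⊂ Y).attach, mob M X Z.1
  else 0
termination_by Y.card
decreasing_by
  · have hZ := Z.2
    simp only [Finset.mem_filter] at hZ
    exact Finset.card_lt_card hZ.2.2

/-- The Möbius polynomial of a matroid, as a polynomial in `S` (the outer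
variable) whose coefficients are polynomials in `T` (the inner variable):
`μ_M(S,T) = Σ_{x ∈ L} Σ_{x ⊆ y ∈ L} μ(x,y) S^{r(x)} T^{k - r(y)}`,
where `L` is the lattice of flats and `k` is the rank of `M`. -/
noncomputable def mobiusPoly [Fintype α] (M : Matroid α) : Polynomial (Polynomial ℤ) :=
  ∑ x ∈ flats M, ∑ y ∈ (flats M).filter (fun y => x ⊆ y),
    mob M x y • (Polynomial.X ^ (mrk M x) *
      Polynomial.C (Polynomial.X ^ (mrk M Finset.univ - mrk M y)))

/-- The coboundary polynomial of a matroid, as a polynomial in `S` (the outer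
variable) whose coefficients are polynomials in `T` (the inner variable):
`χ_M(S,T) = Σ_{x ∈ L} Σ_{x ⊆ y ∈ L} μ(x,y) S^{|x|} T^{k - r(y)}`,
where `L` is the lattice of flats, `|x|` is the number of ground-set elements
of the flat `x`, and `k` is the rank of `M`. -/
noncomputable def cobPoly [Fintype α] (M : Matroid α) : Polynomial (Polynomial ℤ) :=
  ∑ x ∈ flats M, ∑ y ∈ (flats M).filter (fun y => x ⊆ y),
    mob M x y • (Polynomial.X ^ x.card *
      Polynomial.C (Polynomial.X ^ (mrk M Finset.univ - mrk M y)))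

section Helpers

variable [Fintype α] {M : Matroid α}

lemma card_le_mrk {I x : Finset α} (hIx : I ⊆ x) (hI : M.Indep ↑I) : I.card ≤ mrk M x :=
  Finset.le_sup (by simp [Finset.mem_filter, Finset.mem_powerset, hIx, hI])

lemma mrk_le_card (x : Finset α) : mrk M x ≤ x.card :=
  Finset.sup_le fun I hI => Finset.card_le_card
    (Finset.mem_powerset.1 (Finset.mem_filter.1 hI).1)

lemma mrk_mono {x y : Finset α} (h : x ⊆ y) : mrk M x ≤ mrk M y :=
  Finset.sup_le fun I hI => by
    have h' := Finset.mem_filter.1 hI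
    exact card_le_mrk ((Finset.mem_powerset.1 h'.1).trans h) h'.2

lemma exists_mrk_witness (x : Finset α) :
    ∃ I, I ⊆ x ∧ M.Indep ↑I ∧ I.card = mrk M x := by
  set s := x.powerset.filter (fun (I : Finset α) => M.Indep (I : Set α)) with hs
  have hne : s.Nonempty := ⟨∅, by simp [hs]⟩
  obtain ⟨I, hI, hIc⟩ := Finset.exists_mem_eq_sup s hne (Finset.card : Finset α → ℕ)
  rw [hs, Finset.mem_filter] at hI
  exact ⟨I, Finset.mem_powerset.1 hI.1, hI.2, hIc.symm⟩

lemma mrk_indep {x : Finset α} (h : M.Indep ↑x) : mrk M x = x.card :=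
  le_antisymm (mrk_le_card x) (card_le_mrk Finset.Subset.rfl h)

lemma subset_closure_witness (hE : M.E = Set.univ) {x I : Finset α} (hIx : I ⊆ x)
    (hI : M.Indep ↑I) (hcard : mrk M x ≤ I.card) : ↑x ⊆ M.closure ↑I := by
  intro e he
  by_cases heI : e ∈ I
  · exact M.subset_closure ↑I (by simp [hE]) heI
  · have hdep : ¬ M.Indep (insert e (↑I : Set α)) := by
      intro hind
      rw [← Finset.coe_insert] at hind
      have h1 : (insert e I).card ≤ mrk M x :=
        card_le_mrk (Finset.insert_subset (by exact_mod_cast he) hIx) hind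
      rw [Finset.card_insert_of_notMem heI] at h1
      omega
    have hd : M.Dep (insert e (↑I : Set α)) :=
      Matroid.dep_of_not_indep hdep (by simp [hE])
    exact ((hI.insert_dep_iff).1 hd).1

lemma flat_closure (M : Matroid α) (X : Set α) : M.IsFlat (M.closure X) := by
  constructor
  · intro I Y hIF hIY
    have h2 : M.closure I = M.closure (M.closure X) := hIF.closure_eq_closure
    rw [Matroid.closure_closure] at h2
    exact hIY.subset_closure.trans (by rw [h2])
  · exact M.closure_subset_ground X

lemma flats_eq_of_subset_of_mrk_eq (hE : M.E = Set.univ) {x y : Finset α}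
    (hx : M.IsFlat ↑x) (hy : M.IsFlat ↑y) (hxy : x ⊆ y) (hr : mrk M x = mrk M y) :
    x = y := by
  obtain ⟨I, hIx, hI, hIc⟩ := exists_mrk_witness (M := M) x
  have h1 : (↑y : Set α) ⊆ M.closure ↑I :=
    subset_closure_witness hE (hIx.trans hxy) hI (by omega)
  have h2 : M.closure ↑I ⊆ ↑x := by
    have h3 := M.closure_subset_closure (Finset.coe_subset.2 hIx)
    rwa [hx.closure] at h3
  exact Finset.Subset.antisymm hxy (by exact_mod_cast h1.trans h2)

end Helpers



section Girth

variable [Fintype α] {M : Matroid α}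

lemma exists_circuit_subset_aux (hE : M.E = Set.univ) :
    ∀ n (s : Set α), s.ncard ≤ n → M.Dep s → ∃ C, C ⊆ s ∧ IsCircuit M C := by
  intro n
  induction n with
  | zero =>
    intro s hs hdep
    rw [Nat.le_zero, Set.ncard_eq_zero (Set.toFinite s)] at hs
    exact absurd (hs ▸ M.empty_indep) hdep.not_indep
  | succ n ih =>
    intro s hs hdep
    by_cases h : ∀ ⦃D⦄, D ⊂ s → M.Indep D
    · exact ⟨s, Set.Subset.rfl, hdep, h⟩
    · push_neg at h
      obtain ⟨D, hDs, hD⟩ := h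
      have hDdep : M.Dep D := Matroid.dep_of_not_indep hD (by simp [hE])
      have hcard : D.ncard < s.ncard := Set.ncard_lt_ncard hDs (Set.toFinite s)
      obtain ⟨C, hCD, hC⟩ := ih D (by omega) hDdep
      exact ⟨C, hCD.trans hDs.subset, hC⟩

lemma indep_of_ncard_lt_girth (hE : M.E = Set.univ) {s : Set α}
    (h : s.ncard < girth M) : M.Indep s := by
  by_contra hind
  obtain ⟨C, hCs, hC⟩ := exists_circuit_subset_aux hE s.ncard s le_rfl
    (Matroid.dep_of_not_indep hind (by simp [hE]))
  have h1 : girth M ≤ C.ncard := Nat.sInf_le ⟨C, hC, rfl⟩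
  have h2 : C.ncard ≤ s.ncard := Set.ncard_le_ncard hCs (Set.toFinite s)
  omega

lemma exists_circuit_girth (h : 2 < girth M) :
    ∃ C, IsCircuit M C ∧ C.ncard = girth M := by
  have hne : {n | ∃ C, IsCircuit M C ∧ C.ncard = n}.Nonempty := by
    by_contra h'
    rw [Set.not_nonempty_iff_eq_empty] at h'
    rw [girth, h', Nat.sInf_empty] at h
    omega
  exact Nat.sInf_mem hne

lemma girth_sub_one_le_mrk_univ (hE : M.E = Set.univ) (h : 2 < girth M) :
    girth M - 1 ≤ mrk M Finset.univ := by
  obtain ⟨C, hC, hCcard⟩ := exists_circuit_girth h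
  have hCne : C.Nonempty := by
    rw [← Set.ncard_pos (Set.toFinite C)]
    omega
  obtain ⟨e, he⟩ := hCne
  have hI : M.Indep (C \ {e}) := hC.2 (Set.sdiff_singleton_ssubset.2 he)
  have hIcard : (C \ {e}).ncard = girth M - 1 := by
    rw [Set.ncard_diff_singleton_of_mem he, hCcard]
  have := card_le_mrk (I := (C \ {e}).toFinset) (x := Finset.univ)
    (Finset.subset_univ _) (by rwa [Set.coe_toFinset])
  rwa [← Set.ncard_eq_toFinset_card', hIcard] at this

end Girth

section Whitney

variable [Fintype α] {M : Matroid α}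

noncomputable def W (M : Matroid α) (j : ℕ) : ℕ :=
  ((flats M).filter fun F => mrk M F = j).card

lemma flat_of_small_card (hE : M.E = Set.univ) {F : Finset α}
    (h : F.card + 1 < girth M) : M.IsFlat ↑F := by
  have hFind : M.Indep ↑F :=
    indep_of_ncard_lt_girth hE (by rw [Set.ncard_coe_finset]; omega)
  have hcl : M.closure ↑F = ↑F := by
    refine subset_antisymm ?_ (M.subset_closure ↑F (by simp [hE]))
    intro e he
    by_contra heF
    have hdep : M.Dep (insert e (↑F : Set α)) :=
      (hFind.insert_dep_iff).2 ⟨he, heF⟩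
    have hind : M.Indep (insert e (↑F : Set α)) := by
      rw [← Finset.coe_insert]
      refine indep_of_ncard_lt_girth hE ?_
      rw [Set.ncard_coe_finset, Finset.card_insert_of_notMem (by exact_mod_cast heF)]
      omega
    exact hdep.not_indep hind
  rw [← hcl]
  exact flat_closure M ↑F

lemma flats_filter_eq_powersetCard (hE : M.E = Set.univ) {j : ℕ}
    (hj : j + 2 ≤ girth M) :
    (flats M).filter (fun F => mrk M F = j) = Finset.powersetCard j Finset.univ := by
  ext F
  simp only [Finset.mem_filter, flats, Finset.mem_univ, true_and,
    Finset.mem_powersetCard_univ]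
  constructor
  · rintro ⟨hF, hrk⟩
    have hle : j ≤ F.card := hrk ▸ mrk_le_card F
    by_contra hne
    have hlt : j + 1 ≤ F.card := by omega
    obtain ⟨S, hSF, hScard⟩ := Finset.exists_subset_card_eq hlt
    have hSind : M.Indep ↑S := indep_of_ncard_lt_girth hE
      (by rw [Set.ncard_coe_finset, hScard]; omega)
    have := card_le_mrk hSF hSind
    omega
  · intro hcard
    have hFind : M.Indep ↑F := indep_of_ncard_lt_girth hE
      (by rw [Set.ncard_coe_finset, hcard]; omega)
    exact ⟨flat_of_small_card hE (by omega), by rw [mrk_indep hFind, hcard]⟩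

lemma W_eq_choose (hE : M.E = Set.univ) {j : ℕ} (hj : j + 2 ≤ girth M) :
    W M j = (Fintype.card α).choose j := by
  rw [W, flats_filter_eq_powersetCard hE hj, Finset.card_powersetCard,
    Finset.card_univ]

lemma closure_diff_singleton_of_circuit (hE : M.E = Set.univ) {C : Set α}
    (hC : IsCircuit M C) {e : α} (he : e ∈ C) :
    M.closure (C \ {e}) = M.closure C := by
  have hind : M.Indep (C \ {e}) := hC.2 (Set.sdiff_singleton_ssubset.2 he)
  have hdep : M.Dep (insert e (C \ {e})) := by
    rw [Set.insert_diff_singleton, Set.insert_eq_self.2 he]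
    exact hC.1
  have hecl : e ∈ M.closure (C \ {e}) := ((hind.insert_dep_iff).1 hdep).1
  have h1 : C ⊆ M.closure (C \ {e}) := by
    intro x hx
    by_cases hxe : x = e
    · rwa [hxe]
    · exact M.subset_closure (C \ {e}) (by simp [hE]) ⟨hx, hxe⟩
  refine subset_antisymm (M.closure_subset_closure Set.diff_subset) ?_
  have := M.closure_subset_closure h1
  rwa [Matroid.closure_closure] at this

lemma W_lt_choose (hE : M.E = Set.univ) (h2 : 2 < girth M) :
    W M (girth M - 1) < (Fintype.card α).choose (girth M - 1) := by
  set j := girth M - 1 with hj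
  by_contra hcon
  push_neg at hcon
  set s := (flats M).filter fun F => mrk M F = j with hs
  set t := Finset.powersetCard j (Finset.univ : Finset α) with ht
  have hcardle : t.card ≤ s.card := by
    rw [ht, Finset.card_powersetCard, Finset.card_univ]
    exact hcon
  -- the witness function
  set f : ∀ F ∈ s, Finset α := fun F _ => (exists_mrk_witness (M := M) F).choose with hf
  have hfspec : ∀ F (hF : F ∈ s), f F hF ⊆ F ∧ M.Indep ↑(f F hF) ∧ (f F hF).card = mrk M F :=
    fun F _ => (exists_mrk_witness (M := M) F).choose_spec
  have hFcl : ∀ F (hF : F ∈ s), (↑F : Set α) = M.closure ↑(f F hF) := by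
    intro F hF
    obtain ⟨h1, h2', h3⟩ := hfspec F hF
    have hflat : M.IsFlat ↑F := (Finset.mem_filter.1 (Finset.mem_filter.1 hF).1).2
    refine subset_antisymm (subset_closure_witness hE h1 h2' (by omega)) ?_
    have h4 := M.closure_subset_closure (Finset.coe_subset.2 h1)
    rwa [hflat.closure] at h4
  have hmapsto : ∀ F (hF : F ∈ s), f F hF ∈ t := by
    intro F hF
    rw [ht, Finset.mem_powersetCard_univ, (hfspec F hF).2.2]
    exact (Finset.mem_filter.1 hF).2
  have hinj : ∀ F₁ F₂ (hF₁ : F₁ ∈ s) (hF₂ : F₂ ∈ s), f F₁ hF₁ = f F₂ hF₂ → F₁ = F₂ := by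
    intro F₁ F₂ hF₁ hF₂ heq
    apply Finset.coe_injective
    rw [hFcl F₁ hF₁, hFcl F₂ hF₂, heq]
  have hsurj := Finset.surj_on_of_inj_on_of_card_le f hmapsto hinj hcardle
  -- now find a circuit and two erased versions
  obtain ⟨C, hC, hCcard⟩ := exists_circuit_girth (M := M) h2
  set Cf := C.toFinset with hCf
  have hCfcard : Cf.card = girth M := by
    rw [hCf, ← Set.ncard_eq_toFinset_card', hCcard]
  obtain ⟨e₁, he₁, e₂, he₂, hne⟩ := Finset.one_lt_card.1 (by omega : 1 < Cf.card)
  have hclerase : ∀ e ∈ Cf, M.closure ↑(Cf.erase e) = M.closure C := by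
    intro e he
    have : (↑(Cf.erase e) : Set α) = C \ {e} := by
      rw [Finset.coe_erase, hCf, Set.coe_toFinset]
    rw [this]
    exact closure_diff_singleton_of_circuit hE hC (by rwa [hCf, Set.mem_toFinset] at he)
  have hmem : ∀ e ∈ Cf, Cf.erase e ∈ t := by
    intro e he
    rw [ht, Finset.mem_powersetCard_univ, Finset.card_erase_of_mem he, hCfcard]
  obtain ⟨F₁, hF₁, hFe₁⟩ := hsurj _ (hmem e₁ he₁)
  obtain ⟨F₂, hF₂, hFe₂⟩ := hsurj _ (hmem e₂ he₂)
  have hFF : F₁ = F₂ := by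
    apply Finset.coe_injective
    rw [hFcl F₁ hF₁, hFcl F₂ hF₂, ← hFe₁, ← hFe₂, hclerase e₁ he₁, hclerase e₂ he₂]
  have : Cf.erase e₁ = Cf.erase e₂ := by
    rw [hFe₁, hFe₂]
    congr 1
  have he₂' : e₂ ∈ Cf.erase e₁ := Finset.mem_erase.2 ⟨hne.symm, he₂⟩
  rw [this] at he₂'
  exact (Finset.mem_erase.1 he₂').1 rfl

end Whitney

section Poly

variable [Fintype α] {M : Matroid α}

lemma mob_self (x : Finset α) : mob M x x = 1 := by
  rw [mob, if_pos rfl]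

lemma term_coeff (j m u v : ℕ) (z : ℤ) :
    (((z • ((Polynomial.X : Polynomial (Polynomial ℤ)) ^ u *
      Polynomial.C (Polynomial.X ^ v))).coeff j).coeff m) =
      if u = j ∧ v = m then z else 0 := by
  rw [Polynomial.coeff_smul, Polynomial.coeff_mul_C, Polynomial.coeff_X_pow]
  by_cases hu : u = j
  · subst hu
    rw [if_pos rfl, one_mul, Polynomial.coeff_smul, Polynomial.coeff_X_pow]
    by_cases hv : v = m
    · subst hv
      simp
    · rw [if_neg (Ne.symm hv), if_neg (by tauto), smul_zero]
  · rw [if_neg (Ne.symm hu), zero_mul, smul_zero, Polynomial.coeff_zero,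
      if_neg (by tauto)]

lemma univ_mem_flats (hE : M.E = Set.univ) : (Finset.univ : Finset α) ∈ flats M := by
  rw [flats, Finset.mem_filter]
  refine ⟨Finset.mem_univ _, ?_⟩
  rw [Finset.coe_univ, ← hE]
  exact M.ground_isFlat

lemma coeff_mobiusPoly (hE : M.E = Set.univ) {j : ℕ} (hjk : j ≤ mrk M Finset.univ) :
    ((mobiusPoly M).coeff j).coeff (mrk M Finset.univ - j) = (W M j : ℤ) := by
  set k := mrk M Finset.univ with hk
  have hstep : ((mobiusPoly M).coeff j).coeff (k - j) =
      ∑ x ∈ flats M, ∑ y ∈ (flats M).filter (fun y => x ⊆ y),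
        (if mrk M x = j ∧ k - mrk M y = k - j then mob M x y else 0) := by
    rw [mobiusPoly, Polynomial.finset_sum_coeff, Polynomial.finset_sum_coeff]
    refine Finset.sum_congr rfl fun x hx => ?_
    rw [Polynomial.finset_sum_coeff, Polynomial.finset_sum_coeff]
    exact Finset.sum_congr rfl fun y hy => term_coeff j (k - j) (mrk M x) (k - mrk M y) _
  rw [hstep]
  have hstep2 : ∀ x ∈ flats M,
      (∑ y ∈ (flats M).filter (fun y => x ⊆ y),
        (if mrk M x = j ∧ k - mrk M y = k - j then mob M x y else 0)) =
      (if mrk M x = j then (1 : ℤ) else 0) := by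
    intro x hx
    by_cases hxj : mrk M x = j
    · rw [if_pos hxj]
      have hxmem : x ∈ (flats M).filter (fun y => x ⊆ y) :=
        Finset.mem_filter.2 ⟨hx, Finset.Subset.rfl⟩
      rw [Finset.sum_eq_single_of_mem x hxmem]
      · rw [if_pos ⟨hxj, by rw [hxj]⟩, mob_self]
      · intro y hy hyx
        rw [Finset.mem_filter] at hy
        rw [if_neg]
        rintro ⟨-, h2⟩
        have hyk : mrk M y ≤ k := mrk_mono (Finset.subset_univ y)
        have hyj : mrk M y = j := by omega
        exact hyx (flats_eq_of_subset_of_mrk_eq hE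
          ((Finset.mem_filter.1 hx).2) ((Finset.mem_filter.1 hy.1).2) hy.2 (by rw [hxj, hyj])).symm
    · rw [if_neg hxj]
      refine Finset.sum_eq_zero fun y _ => ?_
      rw [if_neg]
      rintro ⟨h1, -⟩
      exact hxj h1
  rw [Finset.sum_congr rfl hstep2, Finset.sum_boole, W]

lemma natDegree_mobiusPoly (hE : M.E = Set.univ) :
    (mobiusPoly M).natDegree = mrk M Finset.univ := by
  set k := mrk M Finset.univ with hk
  apply le_antisymm
  · rw [Polynomial.natDegree_le_iff_coeff_eq_zero]
    intro m hm
    rw [mobiusPoly, Polynomial.finset_sum_coeff]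
    refine Finset.sum_eq_zero fun x _ => ?_
    rw [Polynomial.finset_sum_coeff]
    refine Finset.sum_eq_zero fun y _ => ?_
    have hxm : mrk M x ≠ m := by
      have := mrk_mono (M := M) (Finset.subset_univ x)
      omega
    rw [Polynomial.coeff_smul, Polynomial.coeff_mul_C, Polynomial.coeff_X_pow,
      if_neg (Ne.symm hxm), zero_mul, smul_zero]
  · apply Polynomial.le_natDegree_of_ne_zero
    intro h0
    have hc := coeff_mobiusPoly hE (le_refl k)
    rw [h0] at hc
    have hW : 1 ≤ W M k := by
      rw [W, ← Finset.card_singleton (Finset.univ : Finset α)]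
      apply Finset.card_le_card
      intro z hz
      rw [Finset.mem_singleton] at hz
      rw [hz, Finset.mem_filter]
      exact ⟨univ_mem_flats hE, rfl⟩
    rw [Polynomial.coeff_zero] at hc
    have : (W M k : ℤ) = 0 := hc.symm
    omega

end Poly

lemma girth_le_of_poly {α β : Type*} [Fintype α] [Fintype β]
    (M : Matroid α) (N : Matroid β)
    (hME : M.E = Set.univ) (hNE : N.E = Set.univ)
    (hcard : Fintype.card α = Fintype.card β)
    (hM2 : 2 < girth M) (hN2 : 2 < girth N)
    (hW : ∀ j, j ≤ mrk M Finset.univ → W M j = W N j) :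
    girth N ≤ girth M := by
  by_contra hlt
  push_neg at hlt
  set j := girth M - 1 with hj
  have hjk : j ≤ mrk M Finset.univ := by
    have := girth_sub_one_le_mrk_univ hME hM2
    omega
  have h1 : W M j < (Fintype.card α).choose j := W_lt_choose hME hM2
  have h2 : W N j = (Fintype.card β).choose j := W_eq_choose hNE (by omega)
  rw [hW j hjk, h2, ← hcard] at h1
  omega


/-- If two finite simple matroids on `n` elements have equal
Möbius polynomials, then they have the same girth. -/
theorem girth_eq_of_mobiusPoly_eq {α β : Type*} [Fintype α] [Fintype β]
    (M : Matroid α) (N : Matroid β)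
    (hME : M.E = Set.univ) (hNE : N.E = Set.univ)
    (n : ℕ) (hnM : n = Fintype.card α) (hnN : n = Fintype.card β)
    (hMsimple : 2 < girth M) (hNsimple : 2 < girth N)
    (h : mobiusPoly M = mobiusPoly N) :
    girth M = girth N := by
  have hk : mrk M Finset.univ = mrk N Finset.univ := by
    rw [← natDegree_mobiusPoly hME, ← natDegree_mobiusPoly hNE, h]
  have hW : ∀ j, j ≤ mrk M Finset.univ → W M j = W N j := by
    intro j hj
    have c1 := coeff_mobiusPoly hME hj
    have c2 := coeff_mobiusPoly hNE (hk ▸ hj)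
    rw [← hk, ← h] at c2
    rw [c2] at c1
    exact_mod_cast c1.symm
  have hW' : ∀ j, j ≤ mrk N Finset.univ → W N j = W M j := by
    intro j hj
    exact (hW j (by omega)).symm
  have hcard : Fintype.card α = Fintype.card β := by omega
  exact le_antisymm
    (girth_le_of_poly N M hNE hME hcard.symm hNsimple hMsimple hW')
    (girth_le_of_poly M N hME hNE hcard hMsimple hNsimple hW)

end PaperMatroid
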